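/- Let y be a 3×3 complex matrix with yᵀ = y, and let g be its entrywise real part (g i j = Re (y i j)). Suppose g is strictly row diagonally dominant: for every index i, ∑_{j ≠ i} |g i j| < |g i i|. Then there exists β > 0 such that for all d₁, d₂ : Fin 3 → ℂ satisfying ‖d₁ φ + 1‖ ≤ β and ‖d₂ φ + 1‖ ≤ β for every φ ∈ Fin 3, the matrix diagonal(d₁) * ((1/2) • y) + ((1/2) • yᴴ) * diagonal(d₂) is invertible. (This is the rigorous form of Proposition 3: under Assumption 1, for sufficiently small penalty weight β the edge blocks [B]_{ij} of any dual-feasible matrix B of DE(u) are invertible, hence B is G-invertible.) -/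

import Mathlib

open Matrix Finset

/-- **Proposition 3 (rigorous form).** Let `y` be a symmetric 3×3 complex matrix
whose entrywise real part `g` is strictly row diagonally dominant. Then for a
sufficiently small penalty weight `β > 0`, whenever the diagonal multiplier
vectors `d₁, d₂` are within distance `β` of the constant `−1` vector, the edge
block `diagonal d₁ * ((1/2) • y) + ((1/2) • yᴴ) * diagonal d₂` is invertible. -/
theorem edge_block_invertible_for_small_beta
    (y : Matrix (Fin 3) (Fin 3) ℂ) (hy : yᵀ = y)
    (g : Matrix (Fin 3) (Fin 3) ℝ) (hg : ∀ i j, g i j = (y i j).re)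
    (hdom : ∀ i : Fin 3, ∑ j ∈ Finset.univ.erase i, |g i j| < |g i i|) :
    ∃ β : ℝ, 0 < β ∧ ∀ d₁ d₂ : Fin 3 → ℂ,
      (∀ φ : Fin 3, ‖d₁ φ + 1‖ ≤ β) → (∀ φ : Fin 3, ‖d₂ φ + 1‖ ≤ β) →
      IsUnit (Matrix.diagonal d₁ * ((1 / 2 : ℂ) • y)
        + ((1 / 2 : ℂ) • yᴴ) * Matrix.diagonal d₂) := by
  -- the determinant as a continuous function of the pair (d₁, d₂)
  set F : (Fin 3 → ℂ) × (Fin 3 → ℂ) → ℂ := fun p =>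
    (Matrix.diagonal p.1 * ((1 / 2 : ℂ) • y)
      + ((1 / 2 : ℂ) • yᴴ) * Matrix.diagonal p.2).det with hF
  have hcont : Continuous F := by
    apply Continuous.matrix_det
    apply Continuous.add
    · exact ((continuous_fst.matrix_diagonal).matrix_mul continuous_const)
    · exact (continuous_const.matrix_mul (continuous_snd.matrix_diagonal))
  -- the base point
  set p₀ : (Fin 3 → ℂ) × (Fin 3 → ℂ) := (fun _ => -1, fun _ => -1) with hp₀
  -- at the base point the matrix is `-g` (coerced to ℂ)
  have hgdet : g.det ≠ 0 := by
    apply det_ne_zero_of_sum_row_lt_diag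
    simpa [Real.norm_eq_abs] using hdom
  have hbase : F p₀ ≠ 0 := by
    have hmat : (Matrix.diagonal p₀.1 * ((1 / 2 : ℂ) • y)
        + ((1 / 2 : ℂ) • yᴴ) * Matrix.diagonal p₀.2)
        = (-g).map (Complex.ofRealHom : ℝ →+* ℂ) := by
      ext i j
      have hsym : y j i = y i j := congrFun (congrFun hy i) j
      simp only [Matrix.add_apply, Matrix.mul_apply, Matrix.diagonal_apply,
        Matrix.smul_apply, Matrix.conjTranspose_apply, Matrix.map_apply,
        Matrix.neg_apply, hg]
      rw [Finset.sum_eq_single i, Finset.sum_eq_single j] <;>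
        try (intro b _ hb; simp [hb, Ne.symm hb])
      · simp only [if_pos rfl, hsym]
        rw [Complex.ext_iff]
        push_cast
        constructor <;> simp [Complex.add_re, Complex.add_im, hp₀] <;> ring
      · simp
      · simp
    rw [hF]
    simp only [hmat]
    have : ((-g).map (Complex.ofRealHom : ℝ →+* ℂ)).det
        = (Complex.ofRealHom : ℝ →+* ℂ) (-g).det :=
      ((Complex.ofRealHom : ℝ →+* ℂ).map_det (-g)).symm
    rw [this]
    simp [Matrix.det_neg, hgdet]
  -- openness of nonvanishing determinant gives a ball around `p₀`
  have hopen : IsOpen {p : (Fin 3 → ℂ) × (Fin 3 → ℂ) | F p ≠ 0} :=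
    isOpen_compl_singleton.preimage hcont
  obtain ⟨ε, hε, hball⟩ := Metric.isOpen_iff.mp hopen p₀ hbase
  refine ⟨ε / 2, by linarith, fun d₁ d₂ h₁ h₂ => ?_⟩
  have hmem : (d₁, d₂) ∈ Metric.ball p₀ ε := by
    rw [Metric.mem_ball, Prod.dist_eq]
    have key : ∀ (d : Fin 3 → ℂ), (∀ φ, ‖d φ + 1‖ ≤ ε / 2) →
        dist d (fun _ => (-1 : ℂ)) ≤ ε / 2 := by
      intro d hd
      apply dist_pi_le_iff (by linarith) |>.mpr
      intro φ
      simpa [dist_eq_norm, sub_neg_eq_add] using hd φ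
    have := max_le (key d₁ h₁) (key d₂ h₂)
    calc max (dist d₁ p₀.1) (dist d₂ p₀.2) ≤ ε / 2 := this
      _ < ε := by linarith
  have hdet : F (d₁, d₂) ≠ 0 := hball hmem
  rw [Matrix.isUnit_iff_isUnit_det]
  exact isUnit_iff_ne_zero.mpr hdet
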